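/- Let W be a p × p random real symmetric matrix and let W̃ be W with its first row and first column removed. Suppose the entries of an underlying data sample are such that W is a Wishart-type sample covariance matrix W = (1/n) Y Y^⊤ for a p × n matrix Y with i.i.d. standardized entries. Then for z ∈ ℂ with Im z ≠ 0, E[ Σ_{2 ≤ a,b ≤ p} W_{1a} [G_{W̃}(z)]_{ab} W_{b1} ] = −(p−1)/n + ((p−1)/n)·z·E[𝔤^{p−1}(z)], where G_{W̃}(z) = (z − W̃)^{−1} and 𝔤^{p−1}(z) = (1/(p−1)) tr G_{W̃}(z). -/

import Mathlib

open MeasureTheory ProbabilityTheory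

noncomputable section

/-- The Wishart (sample covariance) matrix `W = (1/n) Y Yᵀ` of a `p × n` data sample. -/
def wishart {p n : ℕ} (Y : Fin p → Fin n → ℝ) : Matrix (Fin p) (Fin p) ℝ :=
  Matrix.of fun k l => (1 / (n : ℝ)) * ∑ i : Fin n, Y k i * Y l i

/-- The resolvent `(z − A)⁻¹` of a real matrix, over `ℂ`. -/
def cresolvent {m : ℕ} (A : Matrix (Fin m) (Fin m) ℝ) (z : ℂ) :
    Matrix (Fin m) (Fin m) ℂ :=
  (z • (1 : Matrix (Fin m) (Fin m) ℂ) - A.map (fun a => (a : ℂ)))⁻¹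

open Complex

lemma quad_im {m : ℕ} (B : Matrix (Fin m) (Fin m) ℝ) (hB : B.IsSymm) (z : ℂ)
    (v : Fin m → ℂ) :
    (∑ k, (starRingEnd ℂ) (v k) *
      ((z • (1 : Matrix (Fin m) (Fin m) ℂ) - B.map (fun a => (a : ℂ))).mulVec v k)).im
    = z.im * ∑ k, Complex.normSq (v k) := by
  have hmv : ∀ k, ((z • (1 : Matrix (Fin m) (Fin m) ℂ) - B.map (fun a => (a : ℂ))).mulVec v k)
      = z * v k - ∑ l, (B k l : ℂ) * v l := by
    intro k
    simp only [Matrix.mulVec, dotProduct, Matrix.sub_apply, Matrix.smul_apply,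
      Matrix.one_apply, Matrix.map_apply, smul_eq_mul, sub_mul, mul_ite, mul_one, mul_zero,
      Finset.sum_sub_distrib, ite_mul, zero_mul, Finset.sum_ite_eq, Finset.mem_univ, if_true]
  have key : (∑ k, (starRingEnd ℂ) (v k) *
      ((z • (1 : Matrix (Fin m) (Fin m) ℂ) - B.map (fun a => (a : ℂ))).mulVec v k))
      = z * ((∑ k, Complex.normSq (v k) : ℝ) : ℂ)
        - ∑ k, ∑ l, (starRingEnd ℂ) (v k) * ((B k l : ℂ) * v l) := by
    simp only [hmv, mul_sub, Finset.sum_sub_distrib, Finset.mul_sum]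
    congr 1
    push_cast
    rw [Finset.mul_sum]
    refine Finset.sum_congr rfl fun k _ => ?_
    rw [← Complex.mul_conj]
    ring
  rw [key]
  have ht : (∑ k, ∑ l, (starRingEnd ℂ) (v k) * ((B k l : ℂ) * v l)).im = 0 := by
    rw [← Complex.conj_eq_iff_im]
    rw [map_sum, Finset.sum_comm]
    refine Finset.sum_congr rfl fun a _ => ?_
    rw [map_sum]
    refine Finset.sum_congr rfl fun b _ => ?_
    simp only [map_mul, Complex.conj_conj, Complex.conj_ofReal]
    have hba : B b a = B a b := hB.apply a b
    rw [hba]; ring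
  simp [ht]

lemma res_det_isUnit {m : ℕ} (B : Matrix (Fin m) (Fin m) ℝ) (hB : B.IsSymm) (z : ℂ)
    (hz : z.im ≠ 0) :
    IsUnit (z • (1 : Matrix (Fin m) (Fin m) ℂ) - B.map (fun a => (a:ℂ))).det := by
  rw [isUnit_iff_ne_zero]
  intro h
  obtain ⟨v, hv, hmv⟩ := (Matrix.exists_mulVec_eq_zero_iff).mpr h
  have h0 := quad_im B hB z v
  rw [hmv] at h0
  simp only [Pi.zero_apply, mul_zero, Finset.sum_const_zero, Complex.zero_im] at h0
  have hS : (∑ k, Complex.normSq (v k)) = 0 := by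
    rcases mul_eq_zero.mp h0.symm with h' | h'
    · exact absurd h' hz
    · exact h'
  apply hv
  funext k
  have := (Finset.sum_eq_zero_iff_of_nonneg (fun k _ => Complex.normSq_nonneg (v k))).mp hS k
    (Finset.mem_univ k)
  exact Complex.normSq_eq_zero.mp this

lemma res_entry_bound {m : ℕ} (B : Matrix (Fin m) (Fin m) ℝ) (hB : B.IsSymm) (z : ℂ)
    (hz : z.im ≠ 0) (i j : Fin m) :
    ‖(z • (1 : Matrix (Fin m) (Fin m) ℂ) - B.map (fun a => (a:ℂ)))⁻¹ i j‖ ≤ |z.im|⁻¹ := by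
  set A := z • (1 : Matrix (Fin m) (Fin m) ℂ) - B.map (fun a => (a:ℂ)) with hA
  have hdet := res_det_isUnit B hB z hz
  set v : Fin m → ℂ := fun k => A⁻¹ k j with hv
  have hmv : A.mulVec v = fun k => if k = j then 1 else 0 := by
    funext k
    have h1 : (A * A⁻¹) k j = (1 : Matrix (Fin m) (Fin m) ℂ) k j := by
      rw [Matrix.mul_nonsing_inv A hdet]
    simpa [Matrix.mul_apply, Matrix.one_apply, Matrix.mulVec, dotProduct] using h1
  have h0 := quad_im B hB z v
  rw [hmv] at h0
  simp only [mul_ite, mul_one, mul_zero, Finset.sum_ite_eq', Finset.mem_univ, if_true] at h0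
  set S := ∑ k, Complex.normSq (v k) with hS
  have hSnn : 0 ≤ S := Finset.sum_nonneg fun k _ => Complex.normSq_nonneg _
  have hzpos : 0 < |z.im| := abs_pos.mpr hz
  have habs : ∀ k, ‖v k‖ ≤ Real.sqrt S := by
    intro k
    rw [Complex.norm_def]
    apply Real.sqrt_le_sqrt
    exact Finset.single_le_sum (fun k _ => Complex.normSq_nonneg (v k)) (Finset.mem_univ k)
  have key : |z.im| * S ≤ Real.sqrt S := by
    have h2 : |z.im * S| = |((starRingEnd ℂ) (v j)).im| := by rw [h0]
    rw [abs_mul, _root_.abs_of_nonneg hSnn] at h2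
    rw [h2]
    calc |((starRingEnd ℂ) (v j)).im| = |(v j).im| := by
          rw [Complex.conj_im, abs_neg]
      _ ≤ ‖v j‖ := Complex.abs_im_le_norm _
      _ ≤ Real.sqrt S := habs j
  have hfin : Real.sqrt S ≤ |z.im|⁻¹ := by
    rcases eq_or_lt_of_le (Real.sqrt_nonneg S) with hs | hs
    · rw [← hs]; positivity
    · have hSeq : Real.sqrt S * Real.sqrt S = S := Real.mul_self_sqrt hSnn
      have h1 : |z.im| * Real.sqrt S ≤ 1 := by nlinarith [key]
      rw [← one_div, le_div_iff₀ hzpos, mul_comm]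
      exact h1
  calc ‖A⁻¹ i j‖ = ‖v i‖ := rfl
    _ ≤ Real.sqrt S := habs i
    _ ≤ |z.im|⁻¹ := hfin

section Meas
variable {α : Type*} [MeasurableSpace α] {m q r : ℕ}

instance matMS {q r : ℕ} : MeasurableSpace (Matrix (Fin q) (Fin r) ℂ) :=
  inferInstanceAs (MeasurableSpace (Fin q → Fin r → ℂ))

lemma measurable_matrix_entry {f : α → Matrix (Fin q) (Fin r) ℂ} (hf : Measurable f)
    (i : Fin q) (j : Fin r) : Measurable fun a => f a i j :=
  (measurable_pi_apply j).comp ((measurable_pi_apply i).comp hf)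

lemma measurable_matrix_of {f : α → Matrix (Fin q) (Fin r) ℂ}
    (hf : ∀ i j, Measurable fun a => f a i j) : Measurable f :=
  measurable_pi_lambda _ fun i => measurable_pi_lambda _ fun j => hf i j

lemma measurable_matrix_det {f : α → Matrix (Fin m) (Fin m) ℂ} (hf : Measurable f) :
    Measurable fun a => (f a).det := by
  simp_rw [Matrix.det_apply]
  exact Finset.measurable_sum _ fun σ _ =>
    (Finset.measurable_prod _ fun i _ => measurable_matrix_entry hf (σ i) i).const_smul _

lemma measurable_matrix_inv {f : α → Matrix (Fin m) (Fin m) ℂ} (hf : Measurable f) :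
    Measurable fun a => (f a)⁻¹ := by
  simp_rw [Matrix.inv_def, Ring.inverse_eq_inv']
  refine measurable_matrix_of fun i j => ?_
  simp_rw [Matrix.smul_apply, Matrix.adjugate_apply, smul_eq_mul]
  refine ((measurable_matrix_det hf).inv).mul (measurable_matrix_det ?_)
  refine measurable_matrix_of fun k l => ?_
  simp_rw [Matrix.updateRow_apply]
  by_cases h : k = j <;> simp only [h, if_true, if_false]
  · exact measurable_const
  · exact measurable_matrix_entry hf k l

end Meas

section Alg
variable {p n : ℕ} (y : Fin p → Fin n → ℝ) (z : ℂ)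

lemma wishart_isSymm : (wishart y).IsSymm := by
  ext a b
  simp only [wishart, Matrix.transpose_apply, Matrix.of_apply]
  congr 1
  exact Finset.sum_congr rfl fun i _ => mul_comm _ _

def wishartT : Matrix (Fin n) (Fin n) ℝ :=
  Matrix.of fun i j => (1 / (n : ℝ)) * ∑ a : Fin p, y a i * y a j

lemma wishartT_isSymm : (wishartT y).IsSymm := by
  ext i j
  simp only [wishartT, Matrix.transpose_apply, Matrix.of_apply]
  congr 1
  exact Finset.sum_congr rfl fun a _ => mul_comm _ _

lemma intertwine :
    (z • (1 : Matrix (Fin n) (Fin n) ℂ) - (wishartT y).map (fun a => (a:ℂ)))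
      * (Matrix.of fun (i : Fin n) (a : Fin p) => (y a i : ℂ))
    = (Matrix.of fun (i : Fin n) (a : Fin p) => (y a i : ℂ))
      * (z • (1 : Matrix (Fin p) (Fin p) ℂ) - (wishart y).map (fun a => (a:ℂ))) := by
  ext i a
  simp only [Matrix.mul_apply, Matrix.sub_apply, Matrix.smul_apply, Matrix.one_apply,
    Matrix.map_apply, Matrix.of_apply, smul_eq_mul, sub_mul, mul_sub, mul_ite, ite_mul,
    mul_one, mul_zero, zero_mul, Finset.sum_sub_distrib, Finset.sum_ite_eq, Finset.sum_ite_eq',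
    Finset.mem_univ, if_true, wishart, wishartT]
  congr 1
  · ring
  · push_cast
    simp only [Finset.mul_sum, Finset.sum_mul]
    rw [Finset.sum_comm]
    refine Finset.sum_congr rfl fun j _ => Finset.sum_congr rfl fun b _ => ?_
    ring

lemma swap_inv (hz : z.im ≠ 0) :
    (Matrix.of fun (i : Fin n) (a : Fin p) => (y a i : ℂ))
      * (z • (1 : Matrix (Fin p) (Fin p) ℂ) - (wishart y).map (fun a => (a:ℂ)))⁻¹
    = (z • (1 : Matrix (Fin n) (Fin n) ℂ) - (wishartT y).map (fun a => (a:ℂ)))⁻¹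
      * (Matrix.of fun (i : Fin n) (a : Fin p) => (y a i : ℂ)) := by
  set C : Matrix (Fin n) (Fin p) ℂ := Matrix.of fun i a => (y a i : ℂ) with hC
  set A := z • (1 : Matrix (Fin p) (Fin p) ℂ) - (wishart y).map (fun a => (a:ℂ)) with hA
  set B := z • (1 : Matrix (Fin n) (Fin n) ℂ) - (wishartT y).map (fun a => (a:ℂ)) with hB
  have hAdet := res_det_isUnit (wishart y) (wishart_isSymm y) z hz
  have hBdet := res_det_isUnit (wishartT y) (wishartT_isSymm y) z hz
  have h := intertwine y z
  calc C * A⁻¹ = (B⁻¹ * B) * C * A⁻¹ := by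
        rw [Matrix.nonsing_inv_mul _ hBdet, Matrix.one_mul]
    _ = B⁻¹ * (B * C) * A⁻¹ := by rw [Matrix.mul_assoc B⁻¹ B C]
    _ = B⁻¹ * (C * A) * A⁻¹ := by rw [h]
    _ = (B⁻¹ * C) * (A * A⁻¹) := by
        rw [← Matrix.mul_assoc B⁻¹ C A, Matrix.mul_assoc (B⁻¹ * C) A A⁻¹]
    _ = B⁻¹ * C := by rw [Matrix.mul_nonsing_inv _ hAdet, Matrix.mul_one]

lemma entry_ident (hn : (n:ℝ) ≠ 0) (hz : z.im ≠ 0) (i j : Fin n) :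
    (∑ a, ∑ b, (y a i : ℂ) * cresolvent (wishart y) z a b * (y b j : ℂ))
      = (n : ℂ) * (z * (z • (1 : Matrix (Fin n) (Fin n) ℂ)
            - (wishartT y).map (fun a => (a:ℂ)))⁻¹ i j
          - if i = j then 1 else 0) := by
  classical
  set C : Matrix (Fin n) (Fin p) ℂ := Matrix.of fun i' a => (y a i' : ℂ) with hC
  set Ct : Matrix (Fin p) (Fin n) ℂ := Matrix.of fun a j' => (y a j' : ℂ) with hCt
  set A := z • (1 : Matrix (Fin p) (Fin p) ℂ) - (wishart y).map (fun a => (a:ℂ)) with hA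
  set B := z • (1 : Matrix (Fin n) (Fin n) ℂ) - (wishartT y).map (fun a => (a:ℂ)) with hB
  have hBdet := res_det_isUnit (wishartT y) (wishartT_isSymm y) z hz
  have hlhs : (∑ a, ∑ b, (y a i : ℂ) * cresolvent (wishart y) z a b * (y b j : ℂ))
      = (C * A⁻¹ * Ct) i j := by
    simp only [cresolvent, Matrix.mul_apply, hC, hCt, Matrix.of_apply, Finset.sum_mul, ← hA]
    rw [Finset.sum_comm]
  have hCCt : C * Ct = (n : ℂ) • ((wishartT y).map (fun a => (a:ℂ))) := by
    ext i' j'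
    simp only [Matrix.mul_apply, hC, hCt, Matrix.of_apply, Matrix.smul_apply, Matrix.map_apply,
      wishartT, smul_eq_mul]
    push_cast
    rw [← mul_assoc, mul_one_div, div_self (by exact_mod_cast hn), one_mul]
  have hWc : (wishartT y).map (fun a => (a:ℂ)) = z • (1 : Matrix (Fin n) (Fin n) ℂ) - B := by
    rw [hB, sub_sub_cancel]
  have hswap : C * A⁻¹ = B⁻¹ * C := swap_inv y z hz
  have hfin : C * A⁻¹ * Ct = (n : ℂ) • (z • B⁻¹ - 1) := by
    rw [hswap, Matrix.mul_assoc, hCCt, Matrix.mul_smul, hWc,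
      Matrix.mul_sub, Matrix.mul_smul, Matrix.mul_one, Matrix.nonsing_inv_mul _ hBdet]
  rw [hlhs, hfin]
  simp only [Matrix.smul_apply, Matrix.sub_apply, Matrix.one_apply, smul_eq_mul]

lemma entry_bound (hn : (n:ℝ) ≠ 0) (hz : z.im ≠ 0) (i j : Fin n) :
    ‖∑ a, ∑ b, (y a i : ℂ) * cresolvent (wishart y) z a b * (y b j : ℂ)‖
      ≤ (n : ℝ) * (‖z‖ * |z.im|⁻¹ + 1) := by
  rw [entry_ident y z hn hz i j]
  rw [norm_mul]
  have h1 : ‖((n:ℕ) : ℂ)‖ = (n : ℝ) := by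
    simp [Complex.norm_natCast]
  rw [h1]
  apply mul_le_mul_of_nonneg_left _ (by positivity)
  refine (norm_sub_le _ _).trans ?_
  gcongr
  · rw [norm_mul]
    have := res_entry_bound (wishartT y) (wishartT_isSymm y) z hz i j
    calc ‖z‖ * ‖(z • (1 : Matrix (Fin n) (Fin n) ℂ) - (wishartT y).map (fun a => (a:ℂ)))⁻¹ i j‖
        ≤ ‖z‖ * |z.im|⁻¹ := by gcongr
      _ = ‖z‖ * |z.im|⁻¹ := rfl
  · by_cases h : i = j <;> simp [h]

lemma trace_ident (hn : (n:ℝ) ≠ 0) (hz : z.im ≠ 0) :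
    (∑ i : Fin n, ∑ a, ∑ b, (y a i : ℂ) * cresolvent (wishart y) z a b * (y b i : ℂ))
      = (n : ℂ) * z * Matrix.trace (cresolvent (wishart y) z) - (n : ℂ) * (p : ℂ) := by
  classical
  set A := z • (1 : Matrix (Fin p) (Fin p) ℂ) - (wishart y).map (fun a => (a:ℂ)) with hA
  have hAdet := res_det_isUnit (wishart y) (wishart_isSymm y) z hz
  have hR : cresolvent (wishart y) z = A⁻¹ := rfl
  have h1 : ∀ a b : Fin p, (∑ i : Fin n, (y a i : ℂ) * (y b i : ℂ))
      = (n : ℂ) * ((wishart y a b : ℝ) : ℂ) := by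
    intro a b
    simp only [wishart, Matrix.of_apply]
    push_cast
    rw [← mul_assoc, mul_one_div, div_self (by exact_mod_cast hn), one_mul]
  have h2 : (∑ i : Fin n, ∑ a, ∑ b, (y a i : ℂ) * cresolvent (wishart y) z a b * (y b i : ℂ))
      = (n : ℂ) * Matrix.trace (A⁻¹ * (wishart y).map (fun a => (a:ℂ))) := by
    rw [Finset.sum_comm]
    have : ∀ a : Fin p, (∑ i : Fin n, ∑ b, (y a i : ℂ) * cresolvent (wishart y) z a b * (y b i : ℂ))
        = ∑ b, A⁻¹ a b * ((n : ℂ) * ((wishart y b a : ℝ) : ℂ)) := by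
      intro a
      rw [Finset.sum_comm]
      refine Finset.sum_congr rfl fun b _ => ?_
      rw [← h1 b a, Finset.mul_sum]
      refine Finset.sum_congr rfl fun i _ => ?_
      rw [hR]; ring
    rw [Finset.sum_congr rfl fun a _ => this a]
    rw [Matrix.trace, Finset.mul_sum]
    refine Finset.sum_congr rfl fun a _ => ?_
    rw [Matrix.diag_apply, Matrix.mul_apply, Finset.mul_sum]
    refine Finset.sum_congr rfl fun b _ => ?_
    rw [Matrix.map_apply]
    ring
  rw [h2]
  have hWc : (wishart y).map (fun a => (a:ℂ)) = z • (1 : Matrix (Fin p) (Fin p) ℂ) - A := by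
    rw [hA, sub_sub_cancel]
  rw [hWc, Matrix.mul_sub, Matrix.mul_smul, Matrix.mul_one, Matrix.nonsing_inv_mul _ hAdet]
  rw [Matrix.trace_sub, Matrix.trace_smul, Matrix.trace_one, hR]
  simp only [smul_eq_mul]
  rw [Fintype.card_fin]
  ring

lemma trace_bound (hz : z.im ≠ 0) :
    ‖Matrix.trace (cresolvent (wishart y) z)‖ ≤ (p : ℝ) * |z.im|⁻¹ := by
  rw [Matrix.trace]
  refine (norm_sum_le _ _).trans ?_
  have : ∀ a : Fin p, ‖Matrix.diag (cresolvent (wishart y) z) a‖ ≤ |z.im|⁻¹ := fun a =>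
    res_entry_bound (wishart y) (wishart_isSymm y) z hz a a
  calc ∑ a, ‖Matrix.diag (cresolvent (wishart y) z) a‖ ≤ ∑ _a : Fin p, |z.im|⁻¹ :=
        Finset.sum_le_sum fun a _ => this a
    _ = (p : ℝ) * |z.im|⁻¹ := by simp [Finset.sum_const, mul_comm]

end Alg

lemma sum_swap4 {α : Type*} [AddCommMonoid α] {m1 m2 m3 m4 : ℕ}
    (f : Fin m1 → Fin m2 → Fin m3 → Fin m4 → α) :
    ∑ a, ∑ b, ∑ i, ∑ j, f a b i j = ∑ i, ∑ j, ∑ a, ∑ b, f a b i j :=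
  calc ∑ a, ∑ b, ∑ i, ∑ j, f a b i j
      = ∑ a, ∑ i, ∑ b, ∑ j, f a b i j :=
        Finset.sum_congr rfl fun _ _ => Finset.sum_comm
    _ = ∑ i, ∑ a, ∑ b, ∑ j, f a b i j := Finset.sum_comm
    _ = ∑ i, ∑ a, ∑ j, ∑ b, f a b i j :=
        Finset.sum_congr rfl fun _ _ => Finset.sum_congr rfl fun _ _ => Finset.sum_comm
    _ = ∑ i, ∑ j, ∑ a, ∑ b, f a b i j := Finset.sum_congr rfl fun _ _ => Finset.sum_comm

@[irreducible] def gfun {p n : ℕ} (z : ℂ) (i j : Fin n) (y : Fin p → Fin n → ℝ) : ℂ :=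
  ∑ a : Fin p, ∑ b : Fin p, (y a i : ℂ) * cresolvent (wishart y) z a b * (y b j : ℂ)

lemma gfun_def {p n : ℕ} (z : ℂ) (i j : Fin n) (y : Fin p → Fin n → ℝ) :
    gfun z i j y
      = ∑ a : Fin p, ∑ b : Fin p, (y a i : ℂ) * cresolvent (wishart y) z a b * (y b j : ℂ) := by
  unfold gfun
  rfl

lemma measurable_res {p n : ℕ} (z : ℂ) :
    Measurable fun y : Fin p → Fin n → ℝ => cresolvent (wishart y) z := by
  unfold cresolvent
  apply measurable_matrix_inv
  apply measurable_matrix_of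
  intro a b
  simp only [Matrix.sub_apply, Matrix.smul_apply, Matrix.one_apply, Matrix.map_apply,
    wishart, Matrix.of_apply, smul_eq_mul]
  refine Measurable.sub measurable_const ?_
  refine Complex.measurable_ofReal.comp ?_
  exact measurable_const.mul (Finset.measurable_sum _ fun i _ => by
    fun_prop)

lemma measurable_gfun {p n : ℕ} (z : ℂ) (i j : Fin n) :
    Measurable fun y : Fin p → Fin n → ℝ => gfun z i j y := by
  simp only [gfun_def]
  refine Finset.measurable_sum _ fun a _ => Finset.measurable_sum _ fun b _ => ?_
  have h1 : Measurable fun y : Fin p → Fin n → ℝ => ((y a i : ℝ) : ℂ) :=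
    Complex.measurable_ofReal.comp ((measurable_pi_apply i).comp (measurable_pi_apply a))
  have h3 : Measurable fun y : Fin p → Fin n → ℝ => ((y b j : ℝ) : ℂ) :=
    Complex.measurable_ofReal.comp ((measurable_pi_apply j).comp (measurable_pi_apply b))
  exact (h1.mul (measurable_matrix_entry (measurable_res z) a b)).mul h3

lemma measurable_trres {p n : ℕ} (z : ℂ) :
    Measurable fun y : Fin p → Fin n → ℝ => Matrix.trace (cresolvent (wishart y) z) := by
  simp only [Matrix.trace, Matrix.diag]
  exact Finset.measurable_sum _ fun a _ => measurable_matrix_entry (measurable_res z) a a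

lemma indep_ofReal_mul {Ω : Type*} [MeasurableSpace Ω] {μ : Measure Ω}
    (X : Ω → ℝ) (F : Ω → ℂ)
    (hXF : IndepFun X F μ) (hX : Integrable X μ) (hF : Integrable F μ)
    (hre : Integrable (fun ω => X ω * (F ω).re) μ)
    (him : Integrable (fun ω => X ω * (F ω).im) μ) :
    ∫ ω, (X ω : ℂ) * F ω ∂μ = ((∫ ω, X ω ∂μ : ℝ) : ℂ) * ∫ ω, F ω ∂μ := by
  have hre' : IndepFun X (fun ω => (F ω).re) μ := hXF.comp measurable_id Complex.measurable_re
  have him' : IndepFun X (fun ω => (F ω).im) μ := hXF.comp measurable_id Complex.measurable_im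
  have e1 : ∫ ω, X ω * (F ω).re ∂μ = (∫ ω, X ω ∂μ) * ∫ ω, (F ω).re ∂μ :=
    hre'.integral_fun_mul_eq_mul_integral hX.aestronglyMeasurable hF.re.aestronglyMeasurable
  have e2 : ∫ ω, X ω * (F ω).im ∂μ = (∫ ω, X ω ∂μ) * ∫ ω, (F ω).im ∂μ :=
    him'.integral_fun_mul_eq_mul_integral hX.aestronglyMeasurable hF.im.aestronglyMeasurable
  have hsplit : (fun ω => (X ω : ℂ) * F ω)
      = fun ω => ((X ω * (F ω).re : ℝ) : ℂ) + ((X ω * (F ω).im : ℝ) : ℂ) * Complex.I := by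
    funext ω
    conv_lhs => rw [← Complex.re_add_im (F ω)]
    push_cast
    ring
  rw [hsplit]
  have hI1 : Integrable (fun ω => ((X ω * (F ω).re : ℝ) : ℂ)) μ := hre.ofReal
  have hI2 : Integrable (fun ω => ((X ω * (F ω).im : ℝ) : ℂ) * Complex.I) μ :=
    him.ofReal.mul_const Complex.I
  rw [integral_add hI1 hI2]
  have h3 : ∫ ω, ((X ω * (F ω).im : ℝ) : ℂ) * Complex.I ∂μ
      = (∫ ω, ((X ω * (F ω).im : ℝ) : ℂ) ∂μ) * Complex.I := by
    simpa [smul_eq_mul] using integral_smul_const (fun ω => ((X ω * (F ω).im : ℝ) : ℂ)) Complex.I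
  have hcor : ∀ (f : Ω → ℝ), ∫ ω, ((f ω : ℝ) : ℂ) ∂μ = ((∫ ω, f ω ∂μ : ℝ) : ℂ) := fun f =>
    integral_ofReal
  rw [h3, hcor, hcor, e1, e2]
  have hre_int : ∫ ω, (F ω).re ∂μ = (∫ ω, F ω ∂μ).re := by
    simpa [RCLike.re_to_complex] using integral_re hF
  have him_int : ∫ ω, (F ω).im ∂μ = (∫ ω, F ω ∂μ).im := by
    simpa [RCLike.im_to_complex] using integral_im hF
  have h4 : ∫ ω, F ω ∂μ
      = ((∫ ω, (F ω).re ∂μ : ℝ) : ℂ) + ((∫ ω, (F ω).im ∂μ : ℝ) : ℂ) * Complex.I := by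
    rw [hre_int, him_int, Complex.re_add_im]
  rw [h4]
  push_cast
  ring


set_option maxHeartbeats 2000000 in
/-- **Key resolvent identity for Wishart matrices** (cavity step in the proof of the
Marčenko–Pastur theorem).  The data matrix `Y` has `p+1` rows of i.i.d. standardized
entries, `W = (1/n) Y Yᵀ`, `W̃` is `W` with its first row and column removed, and
`E[ Σ_{a,b ≥ 2} W_{1a} [G_{W̃}(z)]_{ab} W_{b1} ] = −p/n + (p/n)·z·E[𝔤^{p}(z)]`. -/
theorem wishart_resolvent_identity
    {Ω : Type*} [MeasurableSpace Ω] (μ : Measure Ω) [IsProbabilityMeasure μ]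
    {p n : ℕ} (Y : Fin (p + 1) → Fin n → Ω → ℝ)
    (hmeas : ∀ k i, Measurable (Y k i))
    (hindep : iIndepFun
      (fun (ki : Fin (p + 1) × Fin n) => Y ki.1 ki.2) μ)
    (ν : Measure ℝ) [IsProbabilityMeasure ν]
    (hident : ∀ k i, μ.map (Y k i) = ν)
    (hmean : (∫ x, x ∂ν) = 0) (hvar : (∫ x, x ^ 2 ∂ν) = 1)
    (z : ℂ) (hz : z.im ≠ 0) :
    (∫ ω, (∑ a : Fin p, ∑ b : Fin p,
        (wishart (fun k i => Y k i ω) 0 a.succ : ℂ) *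
          (cresolvent (Matrix.of fun a b : Fin p =>
            wishart (fun k i => Y k i ω) a.succ b.succ) z) a b *
          (wishart (fun k i => Y k i ω) b.succ 0 : ℂ)) ∂μ)
      = -(p : ℂ) / (n : ℂ)
        + ((p : ℂ) / (n : ℂ)) * z *
          ∫ ω, ((p : ℂ))⁻¹ *
            Matrix.trace (cresolvent (Matrix.of fun a b : Fin p =>
              wishart (fun k i => Y k i ω) a.succ b.succ) z) ∂μ := by
  classical
  rcases eq_or_ne n 0 with hn0 | hn0
  · subst hn0
    simp [wishart]
  have hn : (n : ℝ) ≠ 0 := Nat.cast_ne_zero.mpr hn0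
  have hnC : (n : ℂ) ≠ 0 := Nat.cast_ne_zero.mpr hn0
  set mins : Ω → Fin p → Fin n → ℝ := fun ω a i => Y a.succ i ω with hmins
  have hminsme : Measurable mins :=
    measurable_pi_lambda _ fun a => measurable_pi_lambda _ fun i => hmeas _ _
  have hWmin : ∀ ω, (Matrix.of fun a b : Fin p =>
      wishart (fun k i => Y k i ω) a.succ b.succ) = wishart (mins ω) := fun ω => rfl
  set Cbd : ℝ := (n : ℝ) * (‖z‖ * |z.im|⁻¹ + 1) with hCbd
  -- integrability of the variables
  have hsq : Integrable (fun x : ℝ => x ^ 2) ν := by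
    by_contra h
    rw [integral_undef h] at hvar
    exact one_ne_zero hvar.symm
  have hidL2 : MemLp (fun x : ℝ => x) 2 ν :=
    (memLp_two_iff_integrable_sq aestronglyMeasurable_id).mpr (by simpa [sq] using hsq)
  have hYL2 : ∀ k i, MemLp (Y k i) 2 μ := by
    intro k i
    have h := hidL2
    rw [← hident k i] at h
    simpa using (memLp_map_measure_iff aestronglyMeasurable_id (hmeas k i).aemeasurable).mp h
  have hYint : ∀ k i, Integrable (Y k i) μ := fun k i => (hYL2 k i).integrable one_le_two
  have hEY : ∀ i, ∫ ω, Y 0 i ω ∂μ = 0 := by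
    intro i
    have h : ∫ x, x ∂(μ.map (Y 0 i)) = ∫ ω, Y 0 i ω ∂μ :=
      integral_map (hmeas 0 i).aemeasurable aestronglyMeasurable_id
    rw [hident 0 i] at h
    rw [← h]
    exact hmean
  have hEY2 : ∀ i, ∫ ω, Y 0 i ω * Y 0 i ω ∂μ = 1 := by
    intro i
    have h : ∫ x, x ^ 2 ∂(μ.map (Y 0 i)) = ∫ ω, (Y 0 i ω) ^ 2 ∂μ :=
      integral_map (hmeas 0 i).aemeasurable (measurable_id.pow_const 2).aestronglyMeasurable
    rw [hident 0 i] at h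
    simp_rw [← pow_two]
    rw [← h]
    exact hvar
  have hXint : ∀ i j : Fin n, Integrable (fun ω => Y 0 i ω * Y 0 j ω) μ := by
    intro i j
    by_cases hij : i = j
    · subst hij
      have := (memLp_two_iff_integrable_sq (hmeas 0 i).aestronglyMeasurable).mp (hYL2 0 i)
      simpa [pow_two] using this
    · have hne : ((0 : Fin (p+1)), i) ≠ ((0 : Fin (p+1)), j) := by simp [hij]
      have hind : IndepFun (Y 0 i) (Y 0 j) μ := hindep.indepFun hne
      exact hind.integrable_mul (hYint 0 i) (hYint 0 j)
  -- the bounded factors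
  have hGmeas : ∀ i j : Fin n, Measurable fun ω => gfun z i j (mins ω) :=
    fun i j => (measurable_gfun z i j).comp hminsme
  have hGbdd : ∀ (i j : Fin n) ω, ‖gfun z i j (mins ω)‖ ≤ Cbd := fun i j ω => by
    rw [gfun_def]
    exact entry_bound (mins ω) z hn hz i j
  have hGint : ∀ i j : Fin n, Integrable (fun ω => gfun z i j (mins ω)) μ := fun i j =>
    (memLp_top_of_bound (hGmeas i j).aestronglyMeasurable Cbd
      (ae_of_all _ (hGbdd i j))).integrable le_top
  have hGrebdd : ∀ (i j : Fin n) ω, ‖(gfun z i j (mins ω)).re‖ ≤ Cbd := fun i j ω =>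
    (Complex.abs_re_le_norm _).trans (hGbdd i j ω)
  have hGimbdd : ∀ (i j : Fin n) ω, ‖(gfun z i j (mins ω)).im‖ ≤ Cbd := fun i j ω =>
    (Complex.abs_im_le_norm _).trans (hGbdd i j ω)
  -- integrability of the full integrand terms
  have hfull : ∀ i j : Fin n,
      Integrable (fun ω => (Y 0 i ω : ℂ) * ((Y 0 j ω : ℂ) * gfun z i j (mins ω))) μ := by
    intro i j
    have h1 : Integrable (fun ω => ((Y 0 i ω * Y 0 j ω : ℝ) : ℂ)) μ := (hXint i j).ofReal
    have h2 := h1.bdd_mul (hGmeas i j).aestronglyMeasurable (ae_of_all _ (hGbdd i j))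
    exact h2.congr (ae_of_all _ fun ω => by push_cast; ring)
  -- key independence computation
  have hkey : ∀ i j : Fin n,
      ∫ ω, (Y 0 i ω : ℂ) * ((Y 0 j ω : ℂ) * gfun z i j (mins ω)) ∂μ
        = if i = j then ∫ ω, gfun z i j (mins ω) ∂μ else 0 := by
    intro i j
    by_cases hij : i = j
    · subst hij
      rw [if_pos rfl]
      have hindepXF : IndepFun (fun ω => Y 0 i ω * Y 0 i ω)
          (fun ω => gfun z i i (mins ω)) μ := by
        set S : Finset (Fin (p+1) × Fin n) := {((0 : Fin (p+1)), i)} with hS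
        set T : Finset (Fin (p+1) × Fin n) := Finset.univ.filter (fun k => k.1 ≠ 0) with hT
        have hdisj : Disjoint S T := by
          simp [hS, hT, Finset.disjoint_left]
        have hbase := hindep.indepFun_finset S T hdisj (fun ki => hmeas ki.1 ki.2)
        have hmemS : (((0 : Fin (p+1)), i)) ∈ S := Finset.mem_singleton_self _
        have hmemT : ∀ (a : Fin p) (i' : Fin n), ((a.succ, i') : Fin (p+1) × Fin n) ∈ T := by
          intro a i'
          simp [hT, Fin.succ_ne_zero a]
        have hφ : Measurable fun u : {x // x ∈ S} → ℝ => u ⟨_, hmemS⟩ * u ⟨_, hmemS⟩ :=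
          (measurable_pi_apply _).mul (measurable_pi_apply _)
        have hΨ : Measurable fun u : {x // x ∈ T} → ℝ =>
            gfun z i i (fun a i' => u ⟨_, hmemT a i'⟩) :=
          (measurable_gfun z i i).comp
            (measurable_pi_lambda _ fun a => measurable_pi_lambda _ fun i' =>
              measurable_pi_apply _)
        exact hbase.comp hφ hΨ
      have heq : (fun ω => (Y 0 i ω : ℂ) * ((Y 0 i ω : ℂ) * gfun z i i (mins ω)))
          = fun ω => ((Y 0 i ω * Y 0 i ω : ℝ) : ℂ) * gfun z i i (mins ω) :=
        funext fun ω => by push_cast; ring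
      rw [heq]
      have hre : Integrable (fun ω => Y 0 i ω * Y 0 i ω * (gfun z i i (mins ω)).re) μ := by
        have := (hXint i i).bdd_mul
          (Complex.measurable_re.comp (hGmeas i i)).aestronglyMeasurable
          (ae_of_all _ (hGrebdd i i))
        exact this.congr (ae_of_all _ fun ω => by simp only [Function.comp_apply]; ring)
      have him : Integrable (fun ω => Y 0 i ω * Y 0 i ω * (gfun z i i (mins ω)).im) μ := by
        have := (hXint i i).bdd_mul
          (Complex.measurable_im.comp (hGmeas i i)).aestronglyMeasurable
          (ae_of_all _ (hGimbdd i i))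
        exact this.congr (ae_of_all _ fun ω => by simp only [Function.comp_apply]; ring)
      rw [indep_ofReal_mul _ _ hindepXF (hXint i i) (hGint i i) hre him, hEY2 i]
      simp
    · rw [if_neg hij]
      set F : Ω → ℂ := fun ω => (Y 0 j ω : ℂ) * gfun z i j (mins ω) with hF
      have hFmeas : Measurable F :=
        (Complex.measurable_ofReal.comp (hmeas 0 j)).mul (hGmeas i j)
      have hindepXF : IndepFun (Y 0 i) F μ := by
        set S : Finset (Fin (p+1) × Fin n) := {((0 : Fin (p+1)), i)} with hS
        set T : Finset (Fin (p+1) × Fin n) :=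
          Finset.univ.filter (fun k => k ≠ ((0 : Fin (p+1)), i)) with hT
        have hdisj : Disjoint S T := by
          simp [hS, hT, Finset.disjoint_left]
        have hbase := hindep.indepFun_finset S T hdisj (fun ki => hmeas ki.1 ki.2)
        have hmemS : (((0 : Fin (p+1)), i)) ∈ S := Finset.mem_singleton_self _
        have hmemTj : (((0 : Fin (p+1)), j)) ∈ T := by
          have hji : j ≠ i := fun h => hij h.symm
          simp [hT, Prod.ext_iff, hji]
        have hmemT : ∀ (a : Fin p) (i' : Fin n), ((a.succ, i') : Fin (p+1) × Fin n) ∈ T := by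
          intro a i'
          simp [hT, Prod.ext_iff, Fin.succ_ne_zero a]
        have hφ : Measurable fun u : {x // x ∈ S} → ℝ => u ⟨_, hmemS⟩ :=
          measurable_pi_apply _
        have hΨ : Measurable fun u : {x // x ∈ T} → ℝ =>
            ((u ⟨_, hmemTj⟩ : ℝ) : ℂ) * gfun z i j (fun a i' => u ⟨_, hmemT a i'⟩) := by
          refine (Complex.measurable_ofReal.comp (measurable_pi_apply _)).mul ?_
          exact (measurable_gfun z i j).comp
            (measurable_pi_lambda _ fun a => measurable_pi_lambda _ fun i' =>
              measurable_pi_apply _)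
        exact hbase.comp hφ hΨ
      have hFint : Integrable F μ := by
        have h1 : Integrable (fun ω => ((Y 0 j ω : ℝ) : ℂ)) μ := (hYint 0 j).ofReal
        have h2 := h1.bdd_mul (hGmeas i j).aestronglyMeasurable (ae_of_all _ (hGbdd i j))
        exact h2.congr (ae_of_all _ fun ω => by rw [hF]; ring)
      have hFre_eq : ∀ ω, (F ω).re = Y 0 j ω * (gfun z i j (mins ω)).re := fun ω => by
        simp [hF, Complex.mul_re]
      have hFim_eq : ∀ ω, (F ω).im = Y 0 j ω * (gfun z i j (mins ω)).im := fun ω => by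
        simp [hF, Complex.mul_im]
      have hre : Integrable (fun ω => Y 0 i ω * (F ω).re) μ := by
        have := (hXint i j).bdd_mul
          (Complex.measurable_re.comp (hGmeas i j)).aestronglyMeasurable
          (ae_of_all _ (hGrebdd i j))
        exact this.congr (ae_of_all _ fun ω => by
          simp only [Function.comp_apply]; rw [hFre_eq ω]; ring)
      have him : Integrable (fun ω => Y 0 i ω * (F ω).im) μ := by
        have := (hXint i j).bdd_mul
          (Complex.measurable_im.comp (hGmeas i j)).aestronglyMeasurable
          (ae_of_all _ (hGimbdd i j))
        exact this.congr (ae_of_all _ fun ω => by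
          simp only [Function.comp_apply]; rw [hFim_eq ω]; ring)
      have : ∫ ω, (Y 0 i ω : ℂ) * F ω ∂μ = ((∫ ω, Y 0 i ω ∂μ : ℝ) : ℂ) * ∫ ω, F ω ∂μ :=
        indep_ofReal_mul _ _ hindepXF (hYint 0 i) hFint hre him
      rw [hF] at this
      rw [this, hEY i]
      simp
  -- trace integrability
  have htrmeas : Measurable fun ω => Matrix.trace (cresolvent (wishart (mins ω)) z) :=
    (measurable_trres z).comp hminsme
  have htrint : Integrable (fun ω => Matrix.trace (cresolvent (wishart (mins ω)) z)) μ :=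
    (memLp_top_of_bound htrmeas.aestronglyMeasurable ((p : ℝ) * |z.im|⁻¹)
      (ae_of_all _ fun ω => trace_bound (mins ω) z hz)).integrable le_top
  -- step 1 : rewrite the integrand
  have hstep1 : ∀ ω, (∑ a : Fin p, ∑ b : Fin p,
        (wishart (fun k i => Y k i ω) 0 a.succ : ℂ) *
          (cresolvent (Matrix.of fun a b : Fin p =>
            wishart (fun k i => Y k i ω) a.succ b.succ) z) a b *
          (wishart (fun k i => Y k i ω) b.succ 0 : ℂ))
      = (1/(n:ℂ))^2 * ∑ i : Fin n, ∑ j : Fin n,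
          (Y 0 i ω : ℂ) * ((Y 0 j ω : ℂ) * gfun z i j (mins ω)) := by
    intro ω
    rw [hWmin ω]
    simp only [gfun_def]
    simp only [wishart, Matrix.of_apply]
    push_cast
    simp only [Finset.mul_sum, Finset.sum_mul]
    rw [sum_swap4, Finset.sum_comm]
    refine Finset.sum_congr rfl fun i _ => Finset.sum_congr rfl fun j _ =>
      Finset.sum_congr rfl fun a _ => Finset.sum_congr rfl fun b _ => ?_
    ring
  -- assemble
  have hlhs : (∫ ω, (∑ a : Fin p, ∑ b : Fin p,
        (wishart (fun k i => Y k i ω) 0 a.succ : ℂ) *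
          (cresolvent (Matrix.of fun a b : Fin p =>
            wishart (fun k i => Y k i ω) a.succ b.succ) z) a b *
          (wishart (fun k i => Y k i ω) b.succ 0 : ℂ)) ∂μ)
      = (1/(n:ℂ))^2 * ∑ i : Fin n, ∫ ω, gfun z i i (mins ω) ∂μ := by
    rw [integral_congr_ae (ae_of_all _ hstep1)]
    rw [integral_const_mul]
    congr 1
    rw [integral_finset_sum _ fun i _ => integrable_finset_sum _ fun j _ => hfull i j]
    refine Finset.sum_congr rfl fun i _ => ?_
    rw [integral_finset_sum _ fun j _ => hfull i j]
    simp only [hkey]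
    simp
  have htrsum : ∀ ω, (∑ i : Fin n, gfun z i i (mins ω))
      = (n : ℂ) * z * Matrix.trace (cresolvent (wishart (mins ω)) z) - (n : ℂ) * (p : ℂ) := by
    intro ω
    simp only [gfun_def]
    exact trace_ident (mins ω) z hn hz
  have hsum2 : ∑ i : Fin n, ∫ ω, gfun z i i (mins ω) ∂μ
      = (n : ℂ) * z * (∫ ω, Matrix.trace (cresolvent (wishart (mins ω)) z) ∂μ)
        - (n : ℂ) * (p : ℂ) := by
    rw [← integral_finset_sum _ fun i _ => hGint i i]
    rw [integral_congr_ae (ae_of_all _ htrsum)]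
    rw [integral_sub (htrint.const_mul _) (integrable_const _)]
    rw [integral_const_mul, integral_const]
    simp
  rw [hlhs, hsum2]
  -- right-hand side
  have hrhs : (∫ ω, ((p : ℂ))⁻¹ *
      Matrix.trace (cresolvent (Matrix.of fun a b : Fin p =>
        wishart (fun k i => Y k i ω) a.succ b.succ) z) ∂μ)
      = ((p : ℂ))⁻¹ * ∫ ω, Matrix.trace (cresolvent (wishart (mins ω)) z) ∂μ := by
    simp only [hWmin]
    rw [integral_const_mul]
  rw [hrhs]
  set T := ∫ ω, Matrix.trace (cresolvent (wishart (mins ω)) z) ∂μ with hTdef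
  rcases eq_or_ne p 0 with hp0 | hp0
  · subst hp0
    have hT0 : T = 0 := by
      rw [hTdef]
      have : ∀ ω, Matrix.trace (cresolvent (wishart (mins ω)) z) = 0 := by
        intro ω
        simp [Matrix.trace]
      rw [integral_congr_ae (ae_of_all _ this)]
      simp
    rw [hT0]
    simp
  · have hpC : (p : ℂ) ≠ 0 := Nat.cast_ne_zero.mpr hp0
    field_simp
    ring

end
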